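/- Every contraction of a left increasing tree is left increasing: if the increasing tree (T,λ) = τ(P), P ∈ Comp_n, is left increasing, then for every subset A ⊆ [n] the A-contraction τ(P|_A) of (T,λ) is left increasing. -/

import Mathlib

set_option linter.unreachableTactic false
set_option linter.unusedTactic false
set_option maxHeartbeats 1000000


open Finset

/-- Candidate set compositions: lists of finite sets of positive naturals. -/
abbrev SC : Type := List (Finset ℕ)

/-- The underlying (ground) set of a list of blocks. -/
def ground (L : SC) : Finset ℕ := L.foldr (· ∪ ·) ∅

/-- `L` is a set composition of `[n] = {1,…,n}`. -/
def IsSetComp (n : ℕ) (L : SC) : Prop :=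
  (∀ B ∈ L, B.Nonempty) ∧ L.Pairwise Disjoint ∧ ground L = Finset.Icc 1 n

/-- The degree of a set composition (largest element of its ground set). -/
def maxG (L : SC) : ℕ := (ground L).sup id

/-- The 1-based rank of `x` inside the finite set `A` (the position of `x` in the
increasing enumeration of `A`, when `x ∈ A`); this is the order preserving
relabelling `A → [|A|]`. -/
def rankIn (A : Finset ℕ) (x : ℕ) : ℕ := (A.filter (· ≤ x)).card

/-- `P|_A` : intersect the blocks with `A`, delete the empty intersections, and
relabel along the order preserving bijection `A → [|A|]`. -/
def restrictSC (A : Finset ℕ) (L : SC) : SC :=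
  (L.map fun B => (B ∩ A).image (rankIn A)).filter fun B => decide B.Nonempty

/-- Shift all entries of all blocks by `p`. -/
def shiftSC (p : ℕ) (L : SC) : SC := L.map (Finset.image (· + p))

/-- The restricted product `∗̄` on set compositions:
`P ∗̄ Q = (P₁,…,P_k, p+Q₁,…,p+Q_l)` for `P ∈ Comp_p`. -/
def barMul (P Q : SC) : SC := P ++ shiftSC (maxG P) Q

/-- The order-preserving relabelling map `S → T` (`is_{S,T}`), for finite sets
of equal cardinality. -/
def relabelFun (S T : Finset ℕ) (x : ℕ) : ℕ := (T.sort (· ≤ ·)).getD (rankIn S x - 1) 0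

/-- Relabel a set composition of `S` along the order-preserving bijection `S → T`. -/
def relabelSC (S T : Finset ℕ) (L : SC) : SC := L.map (Finset.image (relabelFun S T))

variable (R : Type) [CommRing R]

/-- The free module with basis indexed by lists of blocks; the twisted descent
algebra `T_•` is its submodule spanned by the set compositions. -/
abbrev FM := SC →₀ R

/-- `T_•` as a submodule: the span of the set compositions. -/
noncomputable def Tspan : Submodule R (FM R) :=
  Submodule.span R {f : FM R | ∃ n P, IsSetComp n P ∧ f = Finsupp.single P 1}

/-- The restricted product `∗̄` as a bilinear map. -/
noncomputable def barL : FM R →ₗ[R] FM R →ₗ[R] FM R :=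
  Finsupp.lift _ R SC fun P => Finsupp.lift _ R SC fun Q => Finsupp.single (barMul P Q) 1

/-- The symmetrized product `∗̂` on basis elements:
`P ∗̂ Q = Σ is_{[p],A}(P) ∗ is_{[q],B}(Q)` over all `A ⊔ B = [p+q]`, `|A| = p`. -/
noncomputable def hatB (P Q : SC) : FM R :=
  ∑ A ∈ (Finset.Icc 1 (maxG P + maxG Q)).powerset.filter (fun A => A.card = maxG P),
    Finsupp.single
      (relabelSC (Finset.Icc 1 (maxG P)) A P ++
        relabelSC (Finset.Icc 1 (maxG Q)) ((Finset.Icc 1 (maxG P + maxG Q)) \ A) Q) 1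

/-- The symmetrized product `∗̂` as a bilinear map. -/
noncomputable def hatL : FM R →ₗ[R] FM R →ₗ[R] FM R :=
  Finsupp.lift _ R SC fun P => Finsupp.lift _ R SC fun Q => hatB R P Q

/-- `T_• ⊗ T_•`, realized as the free module on pairs of basis elements. -/
abbrev FM2 := (SC × SC) →₀ R

/-- `T_• ⊗ T_• ⊗ T_•`, realized as the free module on triples of basis elements. -/
abbrev FM3 := (SC × SC × SC) →₀ R

/-- The restricted coproduct `δ̄ (P) = Σ_{p=0}^n P|_{[p]} ⊗ P|_{{p+1,…,n}}`. -/
noncomputable def dBarL : FM R →ₗ[R] FM2 R :=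
  Finsupp.lift _ R SC fun P =>
    ∑ p ∈ Finset.range (maxG P + 1),
      Finsupp.single
        (restrictSC (Finset.Icc 1 p) P, restrictSC (Finset.Icc (p+1) (maxG P)) P) 1

/-- The cosymmetrized coproduct `δ̂ (P) = Σ_{A ⊔ B = [n]} P|_A ⊗ P|_B`. -/
noncomputable def dHatL : FM R →ₗ[R] FM2 R :=
  Finsupp.lift _ R SC fun P =>
    ∑ A ∈ (Finset.Icc 1 (maxG P)).powerset,
      Finsupp.single (restrictSC A P, restrictSC ((Finset.Icc 1 (maxG P)) \ A) P) 1

/-- Apply a coproduct to the first tensor factor:  `d ⊗ id : T⊗T → T⊗T⊗T`. -/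
noncomputable def applyFst (d : FM R →ₗ[R] FM2 R) : FM2 R →ₗ[R] FM3 R :=
  Finsupp.lift _ R (SC × SC) fun PQ =>
    Finsupp.mapDomain (fun RS : SC × SC => (RS.1, RS.2, PQ.2)) (d (Finsupp.single PQ.1 1))

/-- Apply a coproduct to the second tensor factor:  `id ⊗ d : T⊗T → T⊗T⊗T`. -/
noncomputable def applySnd (d : FM R →ₗ[R] FM2 R) : FM2 R →ₗ[R] FM3 R :=
  Finsupp.lift _ R (SC × SC) fun PQ =>
    Finsupp.mapDomain (fun RS : SC × SC => (PQ.1, RS.1, RS.2)) (d (Finsupp.single PQ.2 1))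

/-- `ε ⊗ id : T⊗T → T`, where `ε` is the projection onto `T_0 ≅ R`
(the coefficient of the empty set composition). -/
noncomputable def epsFst : FM2 R →ₗ[R] FM R :=
  Finsupp.lift _ R (SC × SC) fun PQ =>
    if PQ.1 = ([] : SC) then Finsupp.single PQ.2 1 else 0

/-- `id ⊗ ε : T⊗T → T`. -/
noncomputable def epsSnd : FM2 R →ₗ[R] FM R :=
  Finsupp.lift _ R (SC × SC) fun PQ =>
    if PQ.2 = ([] : SC) then Finsupp.single PQ.1 1 else 0

/-- The twist map `x ⊗ y ↦ y ⊗ x` on `T_• ⊗ T_•`. -/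
noncomputable def twistL : FM2 R →ₗ[R] FM2 R :=
  Finsupp.lift _ R (SC × SC) fun PQ => Finsupp.single (PQ.2, PQ.1) 1

/-- The counit: projection onto the degree-0 component `T_0 ≅ R`. -/
noncomputable def counitL : FM R →ₗ[R] R :=
  Finsupp.lift _ R SC fun P => if P = ([] : SC) then 1 else 0

inductive PTree : Type
  | eps : PTree
  | wedge : PTree → PTree → List PTree → PTree

inductive LTree : Type
  | eps : LTree
  | wedge : ℕ → LTree → LTree → List LTree → LTree

namespace LTree

def levels : LTree → List ℕ
  | .eps => []
  | .wedge r t0 t1 rest =>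
      r :: (t0.levels ++ t1.levels ++ (rest.attach.map (fun x => x.1.levels)).flatten)
decreasing_by all_goals (first
  | (have h := List.sizeOf_lt_of_mem x.2; simp_wf; simp at h; omega)
  | (have h := List.sizeOf_lt_of_mem x.2; simp_wf; omega)
  | (simp_wf; omega))

def numLevels (t : LTree) : ℕ := t.levels.foldr max 0

def brLevels : LTree → List ℕ
  | .eps => []
  | .wedge r t0 t1 rest =>
      t0.brLevels ++ r :: t1.brLevels ++
        (rest.attach.map (fun x => r :: x.1.brLevels)).flatten
decreasing_by all_goals (first
  | (have h := List.sizeOf_lt_of_mem x.2; simp_wf; simp at h; omega)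
  | (have h := List.sizeOf_lt_of_mem x.2; simp_wf; omega)
  | (simp_wf; omega))

def addLevels (c : ℕ) : LTree → LTree
  | .eps => .eps
  | .wedge r t0 t1 rest =>
      .wedge (r + c) (t0.addLevels c) (t1.addLevels c)
        (rest.attach.map (fun x => x.1.addLevels c))
decreasing_by all_goals (first
  | (have h := List.sizeOf_lt_of_mem x.2; simp_wf; simp at h; omega)
  | (have h := List.sizeOf_lt_of_mem x.2; simp_wf; omega)
  | (simp_wf; omega))

end LTree

def Fgt : LTree → PTree
  | .eps => .eps
  | .wedge _ t0 t1 rest => .wedge (Fgt t0) (Fgt t1) (rest.attach.map (fun x => Fgt x.1))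
decreasing_by all_goals (first
  | (have h := List.sizeOf_lt_of_mem x.2; simp_wf; simp at h; omega)
  | (have h := List.sizeOf_lt_of_mem x.2; simp_wf; omega)
  | (simp_wf; omega))

def graftP (s : PTree) : PTree → PTree
  | .eps => s
  | .wedge t0 t1 rest => .wedge (graftP s t0) t1 rest

def Inc : PTree → LTree
  | .eps => .eps
  | .wedge t0 t1 rest =>
      let incs := Inc t0 :: Inc t1 :: rest.attach.map (fun x => Inc x.1)
      let offs := (incs.map LTree.numLevels).scanl (· + ·) 1
      match (incs.zip offs).map (fun p => p.1.addLevels p.2) with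
      | s0 :: s1 :: srest => .wedge 1 s0 s1 srest
      | _ => .eps
decreasing_by all_goals (first
  | (have h := List.sizeOf_lt_of_mem x.2; simp_wf; simp at h; omega)
  | (have h := List.sizeOf_lt_of_mem x.2; simp_wf; omega)
  | (simp_wf; omega))

def brPaths : LTree → List (List ℕ)
  | .eps => []
  | .wedge _ t0 t1 rest =>
      (brPaths t0).map (fun p => 0 :: p) ++
        ((((t1 :: rest).attach.map (fun x => brPaths x.1)).zipIdx.map Prod.swap |>.map
          (fun is => ([] : List ℕ) :: is.2.map (fun p => (is.1 + 1) :: p))).flatten)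
decreasing_by all_goals (first
  | (have h := List.sizeOf_lt_of_mem x.2; simp_wf; simp at h; omega)
  | (have h := List.sizeOf_lt_of_mem x.2; simp_wf; omega)
  | (simp_wf; omega))

def sigmaOf (t : LTree) : List (Finset ℕ) :=
  let w := t.brLevels
  (List.range (w.foldr max 0)).map fun i =>
    ((List.range w.length).filter (fun j => w.getD j 0 = i + 1)).toFinset.image (· + 1)

/-- The level function is strictly increasing from the root down, all levels
being `> lo`: this expresses that levels strictly increase along every path
joining a leaf to the root. -/
inductive IncrFrom : ℕ → LTree → Prop
  | eps (lo : ℕ) : IncrFrom lo .eps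
  | wedge (lo r : ℕ) (t0 t1 : LTree) (rest : List LTree) :
      lo < r → IncrFrom r t0 → IncrFrom r t1 → (∀ t ∈ rest, IncrFrom r t) →
      IncrFrom lo (.wedge r t0 t1 rest)

/-- An increasing tree: the level function is strictly increasing along every
path from a leaf to the root, and its set of values is `[k]` for some `k ≥ 0`
(it is standard). -/
def IsIncTree (t : LTree) : Prop :=
  IncrFrom 0 t ∧ t.levels.toFinset = Finset.Icc 1 t.numLevels

/-- Two vertices, recorded by their root-to-vertex paths of child indices, lie
on a common path connecting a leaf with the root iff one is an ancestor of the
other, i.e. iff one path is a prefix of the other. -/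
def OnCommonPath (p q : List ℕ) : Prop := p <+: q ∨ q <+: p


namespace Aux
open List

lemma foldr_max_le_of_mem {a : ℕ} {l : List ℕ} (h : a ∈ l) : a ≤ l.foldr max 0 := by
  induction l with
  | nil => simp at h
  | cons b l ih =>
      rcases List.mem_cons.1 h with rfl | h
      · exact le_max_left _ _
      · exact le_trans (ih h) (le_max_right _ _)

lemma foldr_max_eq_sup (l : List ℕ) : l.foldr max 0 = l.toFinset.sup id := by
  induction l with
  | nil => simp
  | cons b l ih => simp [ih, Finset.sup_insert]

lemma sup_Icc_one (m : ℕ) : (Finset.Icc 1 m).sup id = m := by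
  cases m with
  | zero => simp
  | succ m =>
      apply _root_.le_antisymm
      · exact Finset.sup_le fun x hx => by simp only [Finset.mem_Icc] at hx; simpa using hx.2
      · exact Finset.le_sup (f := id) (by simp)

lemma mem_ground {x : ℕ} {L : SC} : x ∈ ground L ↔ ∃ B ∈ L, x ∈ B := by
  induction L with
  | nil => simp [ground]
  | cons B L ih =>
      rw [show ground (B :: L) = B ∪ ground L from rfl]
      simp [Finset.mem_union, ih]

lemma sublist_one (l : List ℕ) (i : ℕ) (hi : i < l.length) : [l.getD i 0] <+ l := by
  rw [List.getD_eq_getElem l 0 hi]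
  exact List.singleton_sublist.2 (l.getElem_mem hi)

lemma sublist_two (l : List ℕ) (i j : ℕ) (hij : i < j) (hj : j < l.length) :
    [l.getD i 0, l.getD j 0] <+ l := by
  induction l generalizing i j with
  | nil => simp at hj
  | cons a l ih =>
      cases i with
      | zero =>
          cases j with
          | zero => omega
          | succ j =>
              simp only [List.getD_cons_zero, List.getD_cons_succ]
              exact List.cons_sublist_cons.2 (sublist_one l j (by simpa using hj))
      | succ i =>
          cases j with
          | zero => omega
          | succ j =>
              simp only [List.getD_cons_succ]
              exact List.sublist_cons_of_sublist a (ih i j (by omega) (by simpa using hj))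

lemma sublist_three (l : List ℕ) (i j k : ℕ) (hij : i < j) (hjk : j < k) (hk : k < l.length) :
    [l.getD i 0, l.getD j 0, l.getD k 0] <+ l := by
  induction l generalizing i j k with
  | nil => simp at hk
  | cons a l ih =>
      cases i with
      | zero =>
          cases j with
          | zero => omega
          | succ j =>
              cases k with
              | zero => omega
              | succ k =>
                  simp only [List.getD_cons_zero, List.getD_cons_succ]
                  exact List.cons_sublist_cons.2
                    (sublist_two l j k (by omega) (by simpa using hk))
      | succ i =>
          cases j with
          | zero => omega
          | succ j =>
              cases k with
              | zero => omega
              | succ k =>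
                  simp only [List.getD_cons_succ]
                  exact List.sublist_cons_of_sublist a (ih i j k (by omega) (by omega) (by simpa using hk))

lemma exists_of_sublist_one {a : ℕ} {l : List ℕ} (h : [a] <+ l) :
    ∃ i, i < l.length ∧ l.getD i 0 = a := by
  have ha : a ∈ l := h.subset (by simp)
  obtain ⟨i, hi, he⟩ := List.mem_iff_getElem.1 ha
  exact ⟨i, hi, by rw [List.getD_eq_getElem l 0 hi]; exact he⟩

lemma exists_of_sublist_two {a b : ℕ} {l : List ℕ} (h : [a, b] <+ l) :
    ∃ i j, i < j ∧ j < l.length ∧ l.getD i 0 = a ∧ l.getD j 0 = b := by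
  induction l with
  | nil => simp at h
  | cons c l ih =>
      rcases List.sublist_cons_iff.1 h with h' | ⟨r, hr, hr'⟩
      · obtain ⟨i, j, h1, h2, h3, h4⟩ := ih h'
        exact ⟨i + 1, j + 1, by omega, by simpa using h2, by simpa using h3, by simpa using h4⟩
      · cases hr
        obtain ⟨j, hj, he⟩ := exists_of_sublist_one hr'
        exact ⟨0, j + 1, by omega, by simpa using hj, rfl, by simpa using he⟩

lemma exists_of_sublist_three {a b c : ℕ} {l : List ℕ} (h : [a, b, c] <+ l) :
    ∃ i j k, i < j ∧ j < k ∧ k < l.length ∧ l.getD i 0 = a ∧ l.getD j 0 = b ∧ l.getD k 0 = c := by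
  induction l with
  | nil => simp at h
  | cons d l ih =>
      rcases List.sublist_cons_iff.1 h with h' | ⟨r, hr, hr'⟩
      · obtain ⟨i, j, k, h1, h2, h3, h4, h5, h6⟩ := ih h'
        exact ⟨i + 1, j + 1, k + 1, by omega, by omega, by simpa using h3,
          by simpa using h4, by simpa using h5, by simpa using h6⟩
      · cases hr
        obtain ⟨j, k, h1, h2, h3, h4⟩ := exists_of_sublist_two hr'
        exact ⟨0, j + 1, k + 1, by omega, by omega, by simpa using h2, rfl,
          by simpa using h3, by simpa using h4⟩

theorem LTree.ind' (P : LTree → Prop) (he : P .eps)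
    (hw : ∀ r t0 t1 rest, P t0 → P t1 → (∀ t ∈ rest, P t) → P (.wedge r t0 t1 rest)) :
    ∀ t, P t := by
  have H : ∀ n (t : LTree), sizeOf t ≤ n → P t := by
    intro n
    induction n with
    | zero =>
        intro t h
        cases t with
        | eps => exact he
        | wedge r t0 t1 rest => simp at h
    | succ n ih =>
        intro t h
        cases t with
        | eps => exact he
        | wedge r t0 t1 rest =>
            simp only [LTree.wedge.sizeOf_spec] at h
            refine hw r t0 t1 rest (ih t0 (by omega)) (ih t1 (by omega)) ?_
            intro t ht
            have := List.sizeOf_lt_of_mem ht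
            exact ih t (by omega)
  exact fun t => H (sizeOf t) t le_rfl

theorem PTree.ind' (P : PTree → Prop) (he : P .eps)
    (hw : ∀ t0 t1 rest, P t0 → P t1 → (∀ t ∈ rest, P t) → P (.wedge t0 t1 rest)) :
    ∀ t, P t := by
  have H : ∀ n (t : PTree), sizeOf t ≤ n → P t := by
    intro n
    induction n with
    | zero =>
        intro t h
        cases t with
        | eps => exact he
        | wedge t0 t1 rest => simp at h
    | succ n ih =>
        intro t h
        cases t with
        | eps => exact he
        | wedge t0 t1 rest =>
            simp only [PTree.wedge.sizeOf_spec] at h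
            refine hw t0 t1 rest (ih t0 (by omega)) (ih t1 (by omega)) ?_
            intro t ht
            have := List.sizeOf_lt_of_mem ht
            exact ih t (by omega)
  exact fun t => H (sizeOf t) t le_rfl

lemma brLevels_wedge (r : ℕ) (t0 t1 : LTree) (rest : List LTree) :
    (LTree.wedge r t0 t1 rest).brLevels =
      t0.brLevels ++ r :: t1.brLevels ++ (rest.map (fun t => r :: t.brLevels)).flatten := by
  rw [LTree.brLevels]
  simp [List.attach_map_val]

lemma levels_wedge (r : ℕ) (t0 t1 : LTree) (rest : List LTree) :
    (LTree.wedge r t0 t1 rest).levels =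
      r :: (t0.levels ++ t1.levels ++ (rest.map (fun t => t.levels)).flatten) := by
  rw [LTree.levels]
  simp [List.attach_map_val]

lemma addLevels_wedge (c r : ℕ) (t0 t1 : LTree) (rest : List LTree) :
    (LTree.wedge r t0 t1 rest).addLevels c =
      .wedge (r + c) (t0.addLevels c) (t1.addLevels c) (rest.map (fun t => t.addLevels c)) := by
  rw [LTree.addLevels]
  simp [List.attach_map_val]

def subLevels (c : ℕ) : LTree → LTree
  | .eps => .eps
  | .wedge r t0 t1 rest =>
      .wedge (r - c) (subLevels c t0) (subLevels c t1)
        (rest.attach.map (fun x => subLevels c x.1))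
decreasing_by all_goals (first
  | (have h := List.sizeOf_lt_of_mem x.2; simp_wf; simp at h; omega)
  | (have h := List.sizeOf_lt_of_mem x.2; simp_wf; omega)
  | (simp_wf; omega))

lemma subLevels_wedge (c r : ℕ) (t0 t1 : LTree) (rest : List LTree) :
    subLevels c (.wedge r t0 t1 rest) =
      .wedge (r - c) (subLevels c t0) (subLevels c t1) (rest.map (subLevels c)) := by
  rw [subLevels]
  simp [List.attach_map_val]

lemma Fgt_wedge (r : ℕ) (t0 t1 : LTree) (rest : List LTree) :
    Fgt (.wedge r t0 t1 rest) = .wedge (Fgt t0) (Fgt t1) (rest.map Fgt) := by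
  rw [Fgt]
  simp [List.attach_map_val]

def shiftAll : ℕ → List LTree → List LTree
  | _, [] => []
  | c, u :: us => u.addLevels c :: shiftAll (c + u.numLevels) us

lemma zip_scanl_shift : ∀ (vs : List LTree) (c : ℕ),
    ((vs.zip ((vs.map LTree.numLevels).scanl (· + ·) c)).map fun p => p.1.addLevels p.2)
      = shiftAll c vs := by
  intro vs
  induction vs with
  | nil => intro c; rfl
  | cons v vs ih =>
      intro c
      simp only [List.map_cons, List.scanl_cons, List.singleton_append, List.zip_cons_cons,
        shiftAll, ih]

lemma Inc_wedge (s0 s1 : PTree) (rest : List PTree) :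
    Inc (.wedge s0 s1 rest) =
      match shiftAll 1 (Inc s0 :: Inc s1 :: rest.map Inc) with
      | t0 :: t1 :: ts => .wedge 1 t0 t1 ts
      | _ => .eps := by
  rw [Inc]
  simp only [List.attach_map_val, zip_scanl_shift]

lemma length_shiftAll : ∀ (vs : List LTree) (c : ℕ), (shiftAll c vs).length = vs.length := by
  intro vs
  induction vs with
  | nil => intro c; rfl
  | cons v vs ih => intro c; simp [shiftAll, ih]

lemma brLevels_eps : (LTree.eps).brLevels = [] := by rw [LTree.brLevels]

lemma levels_eps : (LTree.eps).levels = [] := by rw [LTree.levels]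

lemma addLevels_eps (c : ℕ) : (LTree.eps).addLevels c = .eps := by rw [LTree.addLevels]

lemma subLevels_eps (c : ℕ) : subLevels c LTree.eps = .eps := by rw [subLevels]

lemma brLevels_addLevels (t : LTree) : ∀ c, (t.addLevels c).brLevels = t.brLevels.map (· + c) := by
  induction t using LTree.ind' with
  | he => intro c; rw [addLevels_eps, brLevels_eps]; rfl
  | hw r t0 t1 rest ih0 ih1 ihr =>
      intro c
      rw [addLevels_wedge, brLevels_wedge, brLevels_wedge]
      simp only [List.map_append, List.map_cons, List.map_flatten, List.map_map, ih0 c, ih1 c]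
      repeat first
        | rfl
        | (exact congrArg List.flatten (List.map_congr_left fun t ht => by simp [ihr t ht c]))
        | congr 1

lemma levels_addLevels (t : LTree) : ∀ c, (t.addLevels c).levels = t.levels.map (· + c) := by
  induction t using LTree.ind' with
  | he => intro c; rw [addLevels_eps, levels_eps]; rfl
  | hw r t0 t1 rest ih0 ih1 ihr =>
      intro c
      rw [addLevels_wedge, levels_wedge, levels_wedge]
      simp only [List.map_append, List.map_cons, List.map_flatten, List.map_map, ih0 c, ih1 c]
      repeat first
        | rfl
        | (exact congrArg List.flatten (List.map_congr_left fun t ht => by simp [ihr t ht c]))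
        | congr 1

lemma brLevels_subLevels (t : LTree) : ∀ c, (subLevels c t).brLevels = t.brLevels.map (· - c) := by
  induction t using LTree.ind' with
  | he => intro c; rw [subLevels_eps, brLevels_eps]; rfl
  | hw r t0 t1 rest ih0 ih1 ihr =>
      intro c
      rw [subLevels_wedge, brLevels_wedge, brLevels_wedge]
      simp only [List.map_append, List.map_cons, List.map_flatten, List.map_map, ih0 c, ih1 c]
      repeat first
        | rfl
        | (exact congrArg List.flatten (List.map_congr_left fun t ht => by simp [ihr t ht c]))
        | congr 1

lemma levels_subLevels (t : LTree) : ∀ c, (subLevels c t).levels = t.levels.map (· - c) := by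
  induction t using LTree.ind' with
  | he => intro c; rw [subLevels_eps, levels_eps]; rfl
  | hw r t0 t1 rest ih0 ih1 ihr =>
      intro c
      rw [subLevels_wedge, levels_wedge, levels_wedge]
      simp only [List.map_append, List.map_cons, List.map_flatten, List.map_map, ih0 c, ih1 c]
      repeat first
        | rfl
        | (exact congrArg List.flatten (List.map_congr_left fun t ht => by simp [ihr t ht c]))
        | congr 1

lemma Fgt_subLevels (t : LTree) : ∀ c, Fgt (subLevels c t) = Fgt t := by
  induction t using LTree.ind' with
  | he => intro c; rw [subLevels_eps]
  | hw r t0 t1 rest ih0 ih1 ihr =>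
      intro c
      rw [subLevels_wedge, Fgt_wedge, Fgt_wedge, ih0, ih1]
      congr 1
      rw [List.map_map]
      apply List.map_congr_left
      intro t ht
      simp [ihr t ht c]

lemma mem_brLevels_iff (t : LTree) : ∀ x, x ∈ t.brLevels ↔ x ∈ t.levels := by
  induction t using LTree.ind' with
  | he => intro x; rw [brLevels_eps, levels_eps]
  | hw r t0 t1 rest ih0 ih1 ihr =>
      intro x
      rw [brLevels_wedge, levels_wedge]
      simp only [List.mem_append, List.mem_cons, List.mem_flatten, List.mem_map]
      constructor
      · rintro ((h | rfl | h) | h)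
        · exact Or.inr (Or.inl (Or.inl ((ih0 x).1 h)))
        · exact Or.inl rfl
        · exact Or.inr (Or.inl (Or.inr ((ih1 x).1 h)))
        · obtain ⟨l, ⟨t, ht, rfl⟩, hx⟩ := h
          rcases List.mem_cons.1 hx with rfl | hx
          · exact Or.inl rfl
          · exact Or.inr (Or.inr ⟨t.levels, ⟨t, ht, rfl⟩, (ihr t ht x).1 hx⟩)
      · rintro (rfl | ((h | h) | h))
        · exact Or.inl (Or.inr (Or.inl rfl))
        · exact Or.inl (Or.inl ((ih0 x).2 h))
        · exact Or.inl (Or.inr (Or.inr ((ih1 x).2 h)))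
        · obtain ⟨l, ⟨t, ht, rfl⟩, hx⟩ := h
          exact Or.inr ⟨r :: t.brLevels, ⟨t, ht, rfl⟩, List.mem_cons.2 (Or.inr ((ihr t ht x).2 hx))⟩

lemma le_numLevels_of_mem_levels {t : LTree} {x : ℕ} (h : x ∈ t.levels) : x ≤ t.numLevels :=
  foldr_max_le_of_mem h

lemma le_numLevels_of_mem_brLevels {t : LTree} {x : ℕ} (h : x ∈ t.brLevels) : x ≤ t.numLevels :=
  le_numLevels_of_mem_levels ((mem_brLevels_iff t x).1 h)

lemma IncrFrom.mono {lo lo' : ℕ} {t : LTree} (h : IncrFrom lo t) (hle : lo' ≤ lo) :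
    IncrFrom lo' t := by
  cases h with
  | eps => exact .eps lo'
  | wedge lo r t0 t1 rest h1 h2 h3 h4 => exact .wedge lo' r t0 t1 rest (by omega) h2 h3 h4

lemma lt_of_mem_levels (t : LTree) : ∀ lo, IncrFrom lo t → ∀ x ∈ t.levels, lo < x := by
  induction t using LTree.ind' with
  | he => intro lo h x hx; rw [levels_eps] at hx; simp at hx
  | hw r t0 t1 rest ih0 ih1 ihr =>
      intro lo h x hx
      cases h with
      | wedge lo r t0' t1' rest' h1 h2 h3 h4 =>
          rw [levels_wedge] at hx
          rcases List.mem_cons.1 hx with rfl | hx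
          · exact h1
          · rcases List.mem_append.1 hx with hx | hx
            · rcases List.mem_append.1 hx with hx | hx
              · exact lt_trans h1 (ih0 _ h2 x hx)
              · exact lt_trans h1 (ih1 _ h3 x hx)
            · obtain ⟨l, hl, hx⟩ := List.mem_flatten.1 hx
              obtain ⟨u, hu, rfl⟩ := List.mem_map.1 hl
              exact lt_trans h1 (ihr u hu _ (h4 u hu) x hx)

lemma IncrFrom.of_levels_gt {lo c : ℕ} {t : LTree} (h : IncrFrom lo t)
    (hgt : ∀ x ∈ t.levels, c < x) : IncrFrom c t := by
  cases h with
  | eps => exact .eps c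
  | wedge lo r t0 t1 rest h1 h2 h3 h4 =>
      refine .wedge c r t0 t1 rest ?_ h2 h3 h4
      exact hgt r (by rw [levels_wedge]; exact List.mem_cons_self)

lemma incrFrom_subLevels (t : LTree) : ∀ lo c, c ≤ lo → IncrFrom lo t →
    IncrFrom (lo - c) (subLevels c t) := by
  induction t using LTree.ind' with
  | he => intro lo c _ _; rw [subLevels_eps]; exact .eps _
  | hw r t0 t1 rest ih0 ih1 ihr =>
      intro lo c hc h
      cases h with
      | wedge lo r t0' t1' rest' h1 h2 h3 h4 =>
          rw [subLevels_wedge]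
          have hlor : lo < r := h1
          refine .wedge _ _ _ _ _ (by omega) (ih0 r c (by omega) h2) (ih1 r c (by omega) h3) ?_
          intro u hu
          obtain ⟨v, hv, rfl⟩ := List.mem_map.1 hu
          exact ihr v hv r c (by omega) (h4 v hv)

lemma addLevels_subLevels {c : ℕ} {t : LTree} (h : ∀ x ∈ t.levels, c < x) :
    (subLevels c t).addLevels c = t := by
  induction t using LTree.ind' with
  | he => rw [subLevels_eps, addLevels_eps]
  | hw r t0 t1 rest ih0 ih1 ihr =>
      rw [levels_wedge] at h
      rw [subLevels_wedge, addLevels_wedge]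
      have hr : c < r := h r (List.mem_cons_self)
      congr 1
      · omega
      · exact ih0 fun x hx => h x (by simp [hx])
      · exact ih1 fun x hx => h x (by simp [hx])
      · rw [List.map_map]
        conv_rhs => rw [← List.map_id rest]
        apply List.map_congr_left
        intro u hu
        have : ∀ x ∈ u.levels, c < x := by
          intro x hx
          refine h x (List.mem_cons.2 (Or.inr ?_))
          refine List.mem_append.2 (Or.inr (List.mem_flatten.2 ⟨u.levels, ?_, hx⟩))
          exact List.mem_map.2 ⟨u, hu, rfl⟩
        simpa using ihr u hu this

/-- Pattern avoidance characterizing left increasing words. -/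
def Av (w : List ℕ) : Prop :=
  ∀ a b c : ℕ, [a, b, c] <+ w → b < c → c ≤ a → False

lemma Av.sublist {w w' : List ℕ} (h : Av w) (hs : w' <+ w) : Av w' :=
  fun a b c hsub => h a b c (hsub.trans hs)

lemma Av_nil : Av [] := by intro a b c h _ _; simp at h

lemma Av_map_add {w : List ℕ} (c : ℕ) (h : Av w) : Av (w.map (· + c)) := by
  intro a b e hsub hbe hea
  obtain ⟨l', hl', heq⟩ := List.sublist_map_iff.1 hsub
  match l', heq with
  | [a', b', e'], heq =>
      simp only [List.map_cons, List.map_nil, List.cons.injEq, and_true] at heq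
      obtain ⟨rfl, rfl, rfl⟩ := heq
      exact h a' b' e' hl' (by omega) (by omega)

lemma Av_map_sub {w : List ℕ} (c : ℕ) (h : Av w) (hgt : ∀ x ∈ w, c < x) :
    Av (w.map (· - c)) := by
  intro a b e hsub hbe hea
  obtain ⟨l', hl', heq⟩ := List.sublist_map_iff.1 hsub
  match l', heq with
  | [a', b', e'], heq =>
      simp only [List.map_cons, List.map_nil, List.cons.injEq, and_true] at heq
      obtain ⟨rfl, rfl, rfl⟩ := heq
      have ha := hgt a' (hl'.subset (by simp))
      have hb := hgt b' (hl'.subset (by simp))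
      have he := hgt e' (hl'.subset (by simp))
      exact h a' b' e' hl' (by omega) (by omega)

/-- The word of a list of subtrees, each preceded by a separator `1`, with
accumulated level shifts. -/
def WrdS : ℕ → List LTree → List ℕ
  | _, [] => []
  | c, u :: us => 1 :: ((u.addLevels c).brLevels ++ WrdS (c + u.numLevels) us)

lemma WrdS_eq : ∀ (us : List LTree) (c : ℕ),
    ((shiftAll c us).map (fun t => 1 :: t.brLevels)).flatten = WrdS c us := by
  intro us
  induction us with
  | nil => intro c; rfl
  | cons u us ih => intro c; simp [shiftAll, WrdS, ih]

lemma avWrdS : ∀ (us : List LTree) (c : ℕ),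
    (∀ u ∈ us, Av u.brLevels ∧ ∀ x ∈ u.brLevels, 1 ≤ x) →
    Av (WrdS c us) ∧ ∀ x ∈ WrdS c us, x = 1 ∨ c + 1 ≤ x := by
  intro us
  induction us with
  | nil => intro c _; exact ⟨Av_nil, by simp [WrdS]⟩
  | cons u us ih =>
      intro c hus
      obtain ⟨hAvu, hlow⟩ := hus u (List.mem_cons_self)
      obtain ⟨hAvT, hmemT⟩ := ih (c + u.numLevels) (fun v hv => hus v (List.mem_cons_of_mem _ hv))
      have hf : (u.addLevels c).brLevels = u.brLevels.map (· + c) := brLevels_addLevels u c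
      have hfmem : ∀ x ∈ (u.addLevels c).brLevels, c + 1 ≤ x ∧ x ≤ c + u.numLevels := by
        intro x hx
        rw [hf] at hx
        obtain ⟨y, hy, rfl⟩ := List.mem_map.1 hx
        exact ⟨by have := hlow y hy; omega,
          by have := le_numLevels_of_mem_brLevels hy; omega⟩
      constructor
      · intro a b e hsub hbe hea
        rw [WrdS] at hsub
        rcases List.sublist_cons_iff.1 hsub with hsub | ⟨r, hr, hr'⟩
        · obtain ⟨l₁, l₂, hsplit, h₁, h₂⟩ := List.sublist_append_iff.1 hsub
          match l₁, hsplit, h₁ with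
          | [], hsplit, h₁ =>
              simp only [List.nil_append] at hsplit
              subst hsplit
              exact hAvT a b e h₂ hbe hea
          | [x], hsplit, h₁ =>
              simp only [List.singleton_append, List.cons.injEq] at hsplit
              obtain ⟨rfl, rfl⟩ := hsplit
              have ha := hfmem a (h₁.subset (by simp))
              have hbmem : b ∈ WrdS (c + u.numLevels) us := h₂.subset (by simp)
              have hemem : e ∈ WrdS (c + u.numLevels) us := h₂.subset (by simp)
              rcases hmemT e hemem with rfl | hge
              · rcases hmemT b hbmem with rfl | hgb <;> omega
              · omega
          | [x, y], hsplit, h₁ =>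
              simp only [List.cons_append, List.nil_append, List.cons.injEq] at hsplit
              obtain ⟨rfl, rfl, rfl⟩ := hsplit
              have ha := hfmem a (h₁.subset (by simp))
              have hb := hfmem b (h₁.subset (by simp))
              have hemem : e ∈ WrdS (c + u.numLevels) us := h₂.subset (by simp)
              rcases hmemT e hemem with rfl | hge <;> omega
          | [x, y, z], hsplit, h₁ =>
              simp only [List.cons_append, List.nil_append, List.cons.injEq] at hsplit
              obtain ⟨rfl, rfl, rfl, hnil⟩ := hsplit
              rw [hf] at h₁
              exact Av_map_add c hAvu a b e h₁ hbe hea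
          | x :: y :: z :: d :: l₁', hsplit, h₁ =>
              simp only [List.cons_append, List.cons.injEq] at hsplit
              obtain ⟨_, _, _, hbad⟩ := hsplit
              exact absurd hbad.symm (by simp)
        · simp only [List.cons.injEq] at hr
          obtain ⟨rfl, rfl⟩ := hr
          have hbmem : b ∈ (u.addLevels c).brLevels ++ WrdS (c + u.numLevels) us :=
            hr'.subset (by simp)
          rcases List.mem_append.1 hbmem with hbf | hbT
          · have := hfmem b hbf; omega
          · rcases hmemT b hbT with rfl | hgb <;> omega
      · intro x hx
        rw [WrdS] at hx
        rcases List.mem_cons.1 hx with rfl | hx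
        · exact Or.inl rfl
        · rcases List.mem_append.1 hx with hxf | hxT
          · exact Or.inr (hfmem x hxf).1
          · rcases hmemT x hxT with rfl | hg
            · exact Or.inl rfl
            · exact Or.inr (by omega)

lemma Inc_eps : Inc .eps = .eps := by rw [Inc]

lemma lemB : ∀ s : PTree, Av (Inc s).brLevels ∧ ∀ x ∈ (Inc s).brLevels, 1 ≤ x := by
  intro s
  induction s using PTree.ind' with
  | he => rw [Inc_eps, brLevels_eps]; exact ⟨Av_nil, by simp⟩
  | hw s0 s1 rest ih0 ih1 ihr =>
      have hIncs : ∀ v ∈ Inc s0 :: Inc s1 :: rest.map Inc,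
          Av v.brLevels ∧ ∀ x ∈ v.brLevels, 1 ≤ x := by
        intro v hv
        rcases List.mem_cons.1 hv with rfl | hv
        · exact ih0
        · rcases List.mem_cons.1 hv with rfl | hv
          · exact ih1
          · obtain ⟨t, ht, rfl⟩ := List.mem_map.1 hv
            exact ihr t ht
      obtain ⟨hAvW, hmemW⟩ := avWrdS (Inc s0 :: Inc s1 :: rest.map Inc) 1 hIncs
      have hkey : 1 :: (Inc (.wedge s0 s1 rest)).brLevels
          = WrdS 1 (Inc s0 :: Inc s1 :: rest.map Inc) := by
        rw [Inc_wedge]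
        simp only [shiftAll]
        rw [brLevels_wedge, WrdS, WrdS, ← WrdS_eq]
        simp [List.append_assoc]
      constructor
      · refine Av.sublist hAvW ?_
        rw [← hkey]
        exact List.sublist_cons_self _ _
      · intro x hx
        have : x ∈ WrdS 1 (Inc s0 :: Inc s1 :: rest.map Inc) := by
          rw [← hkey]; exact List.mem_cons_of_mem _ hx
        rcases hmemW x this with rfl | h <;> omega

lemma foldr_max_mem : ∀ (l : List ℕ), l ≠ [] → l.foldr max 0 ∈ l := by
  intro l
  induction l with
  | nil => intro h; exact absurd rfl h
  | cons a l ih =>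
      intro _
      cases l with
      | nil => simp
      | cons b l' =>
          rcases le_or_gt ((b :: l').foldr max 0) a with h | h
          · simp only [List.foldr_cons] at *
            rw [max_eq_left h]
            exact List.mem_cons_self
          · simp only [List.foldr_cons] at *
            rw [max_eq_right (le_of_lt h)]
            exact List.mem_cons_of_mem _ (ih (by simp))

lemma numLevels_def (t : LTree) : t.numLevels = t.levels.foldr max 0 := rfl

lemma numLevels_eq_sup (t : LTree) : t.numLevels = t.levels.toFinset.sup id := by
  rw [numLevels_def, foldr_max_eq_sup]

lemma image_sub_Icc (c d : ℕ) :
    (Finset.Icc (c + 1) d).image (· - c) = Finset.Icc 1 (d - c) := by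
  ext y
  simp only [Finset.mem_image, Finset.mem_Icc]
  constructor
  · rintro ⟨x, hx, rfl⟩; omega
  · intro h; exact ⟨y + c, by omega, by omega⟩

/-- The level sets of the subtrees of a left increasing tree occupy consecutive
intervals. -/
def Chain : ℕ → List LTree → Prop
  | _, [] => True
  | c, u :: us =>
      u.levels.toFinset = Finset.Icc (c + 1) (max c u.numLevels) ∧
        Chain (max c u.numLevels) us

lemma list_toFinset_map (l : List ℕ) (f : ℕ → ℕ) :
    (l.map f).toFinset = l.toFinset.image f := by
  ext y
  simp

lemma CGen : ∀ (us : List LTree) (c : ℕ),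
    (∀ u ∈ us, Av u.brLevels) → (∀ u ∈ us, IncrFrom 0 u) → Chain c us →
    (∀ u ∈ us, ∀ v : LTree, Fgt v = Fgt u → IncrFrom 0 v →
       v.levels.toFinset = Finset.Icc 1 v.numLevels → Av v.brLevels → ∃ s, Inc s = v) →
    ∃ ss : List PTree, shiftAll c (ss.map Inc) = us := by
  intro us
  induction us with
  | nil => intro c _ _ _ _; exact ⟨[], rfl⟩
  | cons u us ih =>
      intro c hAv h0 hchain hrec
      obtain ⟨hL, hchain'⟩ := hchain
      set d := max c u.numLevels with hd
      have hgt : ∀ x ∈ u.levels, c < x := by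
        intro x hx
        have : x ∈ Finset.Icc (c + 1) d := by rw [← hL]; exact List.mem_toFinset.2 hx
        simp only [Finset.mem_Icc] at this
        omega
      have hIncrc : IncrFrom c u := IncrFrom.of_levels_gt (h0 u (List.mem_cons_self)) hgt
      have hIncr0 : IncrFrom 0 (subLevels c u) := by
        have := incrFrom_subLevels u c c le_rfl hIncrc
        simpa using this
      have hlev : (subLevels c u).levels.toFinset = Finset.Icc 1 (d - c) := by
        rw [levels_subLevels, list_toFinset_map, hL, image_sub_Icc]
      have hnum : (subLevels c u).numLevels = d - c := by
        rw [numLevels_eq_sup, hlev, sup_Icc_one]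
      have hAv' : Av (subLevels c u).brLevels := by
        rw [brLevels_subLevels]
        exact Av_map_sub c (hAv u (List.mem_cons_self))
          (fun x hx => hgt x ((mem_brLevels_iff u x).1 hx))
      obtain ⟨s, hs⟩ := hrec u (List.mem_cons_self) (subLevels c u)
        (Fgt_subLevels u c) hIncr0 (by rw [hlev, hnum]) hAv'
      obtain ⟨ss', hss'⟩ := ih d (fun v hv => hAv v (List.mem_cons_of_mem _ hv))
        (fun v hv => h0 v (List.mem_cons_of_mem _ hv)) hchain'
        (fun v hv => hrec v (List.mem_cons_of_mem _ hv))
      refine ⟨s :: ss', ?_⟩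
      simp only [List.map_cons, shiftAll, hs]
      rw [addLevels_subLevels hgt, hnum]
      have hcd : c ≤ d := le_max_left _ _
      rw [show c + (d - c) = d by omega, hss']

lemma chain_of : ∀ (us : List LTree) (c K : ℕ),
    ((us.map LTree.levels).flatten).toFinset = Finset.Icc (c + 1) K →
    us.Pairwise (fun u v => ∀ x ∈ u.levels, ∀ y ∈ v.levels, x < y) →
    Chain c us := by
  intro us
  induction us with
  | nil => intro c K _ _; trivial
  | cons u us ih =>
      intro c K hU hP
      have hUu : u.levels.toFinset ∪ ((us.map LTree.levels).flatten).toFinset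
          = Finset.Icc (c + 1) K := by
        rw [← hU]
        simp [List.toFinset_append]
      have hSmem : ∀ y, y ∈ ((us.map LTree.levels).flatten).toFinset ↔
          ∃ w ∈ us, y ∈ w.levels := by
        intro y
        simp only [List.mem_toFinset, List.mem_flatten, List.mem_map]
        constructor
        · rintro ⟨l, ⟨w, hw, rfl⟩, hy⟩; exact ⟨w, hw, hy⟩
        · rintro ⟨w, hw, hy⟩; exact ⟨w.levels, ⟨w, hw, rfl⟩, hy⟩
      rcases List.pairwise_cons.1 hP with ⟨hPu, hP'⟩
      by_cases hne : u.levels = []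
      · have hL0 : u.levels.toFinset = ∅ := by rw [hne]; rfl
        have hn0 : u.numLevels = 0 := by rw [numLevels_def, hne]; rfl
        constructor
        · rw [hL0, hn0]
          rw [show max c 0 = c from by omega]
          rw [Finset.Icc_eq_empty (by omega)]
        · rw [hn0, show max c 0 = c from by omega]
          refine ih c K ?_ hP'
          rw [← hUu, hL0, Finset.empty_union]
      · have hd_mem : u.numLevels ∈ u.levels := by
          rw [numLevels_def]; exact foldr_max_mem _ hne
        set d := u.numLevels with hdd
        have hdIcc : d ∈ Finset.Icc (c + 1) K := by
          rw [← hUu]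
          exact Finset.mem_union_left _ (List.mem_toFinset.2 hd_mem)
        simp only [Finset.mem_Icc] at hdIcc
        have hLeq : u.levels.toFinset = Finset.Icc (c + 1) d := by
          ext x
          simp only [List.mem_toFinset, Finset.mem_Icc]
          constructor
          · intro hx
            refine ⟨?_, le_numLevels_of_mem_levels hx⟩
            have : x ∈ Finset.Icc (c + 1) K := by
              rw [← hUu]
              exact Finset.mem_union_left _ (List.mem_toFinset.2 hx)
            simp only [Finset.mem_Icc] at this
            omega
          · intro hx
            have : x ∈ Finset.Icc (c + 1) K := by simp only [Finset.mem_Icc]; omega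
            rw [← hUu] at this
            rcases Finset.mem_union.1 this with h | h
            · exact List.mem_toFinset.1 h
            · obtain ⟨w, hw, hy⟩ := (hSmem x).1 h
              have := hPu w hw d hd_mem x hy
              omega
        have hmaxd : max c d = d := by omega
        refine ⟨by rw [hmaxd, hLeq], ?_⟩
        rw [hmaxd]
        refine ih d K ?_ hP'
        ext y
        rw [hSmem y]
        simp only [Finset.mem_Icc]
        constructor
        · rintro ⟨w, hw, hy⟩
          have hyK : y ∈ Finset.Icc (c + 1) K := by
            rw [← hUu]
            exact Finset.mem_union_right _ ((hSmem y).2 ⟨w, hw, hy⟩)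
          simp only [Finset.mem_Icc] at hyK
          have := hPu w hw d hd_mem y hy
          omega
        · intro hy
          have : y ∈ Finset.Icc (c + 1) K := by simp only [Finset.mem_Icc]; omega
          rw [← hUu] at this
          rcases Finset.mem_union.1 this with h | h
          · have : y ∈ u.levels := List.mem_toFinset.1 h
            have := le_numLevels_of_mem_levels this
            omega
          · exact (hSmem y).1 h

lemma sublist_flatten_single : ∀ (L : List (List ℕ)) (j : ℕ) (hj : j < L.length)
    (l : List ℕ), l <+ L[j] → l <+ L.flatten := by
  intro L
  induction L with
  | nil => intro j hj; simp at hj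
  | cons a L ih =>
      intro j hj l hl
      cases j with
      | zero =>
          simp only [List.getElem_cons_zero] at hl
          rw [List.flatten_cons]
          exact hl.trans (List.sublist_append_left _ _)
      | succ j =>
          simp only [List.getElem_cons_succ] at hl
          have := ih j (by simpa using hj) l hl
          rw [List.flatten_cons]
          exact this.trans (List.sublist_append_right _ _)

lemma sublist_flatten_pair : ∀ (L : List (List ℕ)) (i j : ℕ) (hij : i < j)
    (hj : j < L.length) (l1 l2 : List ℕ),
    l1 <+ L[i]'(by omega) → l2 <+ L[j] → l1 ++ l2 <+ L.flatten := by
  intro L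
  induction L with
  | nil => intro i j hij hj; simp at hj
  | cons a L ih =>
      intro i j hij hj l1 l2 h1 h2
      cases i with
      | zero =>
          simp only [List.getElem_cons_zero] at h1
          cases j with
          | zero => omega
          | succ j =>
              simp only [List.getElem_cons_succ] at h2
              have := sublist_flatten_single L j (by simpa using hj) l2 h2
              rw [List.flatten_cons]
              exact List.Sublist.append h1 this
      | succ i =>
          cases j with
          | zero => omega
          | succ j =>
              simp only [List.getElem_cons_succ] at h1 h2
              have := ih i j (by omega) (by simpa using hj) l1 l2 h1 h2
              rw [List.flatten_cons]
              exact this.trans (List.sublist_append_right _ _)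

lemma lemC : ∀ (N : ℕ) (t' : LTree), sizeOf (Fgt t') ≤ N → IncrFrom 0 t' →
    t'.levels.toFinset = Finset.Icc 1 t'.numLevels → Av t'.brLevels →
    ∃ s, Inc s = t' := by
  intro N
  induction N with
  | zero =>
      intro t' h
      exfalso
      cases hF : Fgt t' with
      | eps => rw [hF] at h; simp at h
      | wedge a b l => rw [hF] at h; simp at h
  | succ N ih =>
      intro t' hN h0 hstd hAv
      cases t' with
      | eps => exact ⟨.eps, Inc_eps⟩
      | wedge r t0 t1 rest =>
          set us : List LTree := t0 :: t1 :: rest with hus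
          set K := (LTree.wedge r t0 t1 rest).numLevels with hK
          cases h0 with
          | wedge _ _ _ _ _ h1 h2 h3 h4 =>
          have hIncrU : ∀ u ∈ us, IncrFrom r u := by
            intro u hu
            rcases List.mem_cons.1 hu with rfl | hu
            · exact h2
            · rcases List.mem_cons.1 hu with rfl | hu
              · exact h3
              · exact h4 u hu
          have hsubgt : ∀ u ∈ us, ∀ x ∈ u.levels, r < x := by
            intro u hu x hx
            exact lt_of_mem_levels u r (hIncrU u hu) x hx
          have hrK : r ≤ K := by
            rw [hK]
            exact le_numLevels_of_mem_levels (by rw [levels_wedge]; exact List.mem_cons_self)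
          have h1mem : (1 : ℕ) ∈ (LTree.wedge r t0 t1 rest).levels := by
            rw [← List.mem_toFinset, hstd]
            simp only [Finset.mem_Icc]
            omega
          have hr1 : r = 1 := by
            rw [levels_wedge] at h1mem
            rcases List.mem_cons.1 h1mem with h | h
            · omega
            · exfalso
              rcases List.mem_append.1 h with h | h
              · rcases List.mem_append.1 h with h | h
                · have := hsubgt t0 (by simp [hus]) 1 h; omega
                · have := hsubgt t1 (by simp [hus]) 1 h; omega
              · obtain ⟨l, hl, hmem⟩ := List.mem_flatten.1 h
                obtain ⟨u, hu, rfl⟩ := List.mem_map.1 hl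
                have := hsubgt u (by simp [hus, hu]) 1 hmem
                omega
          subst hr1
          -- the word of the tree, with a leading separator
          have hflat : ((us.map (fun u => 1 :: u.brLevels)).flatten)
              = 1 :: (LTree.wedge 1 t0 t1 rest).brLevels := by
            rw [brLevels_wedge]
            simp [hus]
          have hbrgt : ∀ u ∈ us, ∀ x ∈ u.brLevels, 1 < x := by
            intro u hu x hx
            exact hsubgt u hu x ((mem_brLevels_iff u x).1 hx)
          have hAvU : ∀ u ∈ us, Av u.brLevels := by
            intro u hu a b c hsub hbc hca
            obtain ⟨i, hi, hieq⟩ := List.getElem_of_mem hu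
            have hsub2 : [a, b, c] <+ (us.map (fun u => 1 :: u.brLevels)).flatten := by
              refine sublist_flatten_single _ i (by simpa using hi) _ ?_
              rw [List.getElem_map, hieq]
              exact (hsub.trans (List.sublist_cons_self _ _))
            rw [hflat] at hsub2
            rcases List.sublist_cons_iff.1 hsub2 with hsub2 | ⟨rr, hrr, hrr'⟩
            · exact hAv a b c hsub2 hbc hca
            · simp only [List.cons.injEq] at hrr
              obtain ⟨rfl, rfl⟩ := hrr
              have := hbrgt u hu b (hsub.subset (by simp))
              omega
          have hpair : us.Pairwise (fun u v => ∀ x ∈ u.levels, ∀ y ∈ v.levels, x < y) := by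
            rw [List.pairwise_iff_getElem]
            intro i j hi hj hij
            intro x hx y hy
            have hxbr : x ∈ us[i].brLevels := (mem_brLevels_iff _ x).2 hx
            have hybr : y ∈ us[j].brLevels := (mem_brLevels_iff _ y).2 hy
            have hsub : [x] ++ [1, y] <+ (us.map (fun u => 1 :: u.brLevels)).flatten := by
              refine sublist_flatten_pair _ i j hij (by simpa using hj) _ _ ?_ ?_
              · rw [List.getElem_map]
                exact (List.singleton_sublist.2 hxbr).trans (List.sublist_cons_self _ _)
              · rw [List.getElem_map]
                exact List.cons_sublist_cons.2 (List.singleton_sublist.2 hybr)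
            rw [hflat] at hsub
            have hx1 : 1 < x := hbrgt us[i] (List.getElem_mem _) x hxbr
            have hy1 : 1 < y := hbrgt us[j] (List.getElem_mem _) y hybr
            rcases List.sublist_cons_iff.1 hsub with hsub | ⟨rr, hrr, hrr'⟩
            · by_contra hxy
              exact hAv x 1 y hsub (by omega) (by omega)
            · simp only [List.cons_append, List.nil_append, List.cons.injEq] at hrr
              omega
          have hunion : ((us.map LTree.levels).flatten).toFinset = Finset.Icc 2 K := by
            have hlev : (LTree.wedge 1 t0 t1 rest).levels
                = 1 :: (us.map LTree.levels).flatten := by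
              rw [levels_wedge]
              simp [hus]
            have hins : insert (1 : ℕ) ((us.map LTree.levels).flatten).toFinset
                = Finset.Icc 1 K := by
              rw [← List.toFinset_cons, ← hlev, hstd]
            ext y
            simp only [Finset.mem_Icc]
            constructor
            · intro hy
              have hy1 : y ∈ Finset.Icc 1 K := by
                rw [← hins]; exact Finset.mem_insert_of_mem hy
              simp only [Finset.mem_Icc] at hy1
              have : 1 < y := by
                simp only [List.mem_toFinset, List.mem_flatten, List.mem_map] at hy
                obtain ⟨l, ⟨u, hu, rfl⟩, hmem⟩ := hy
                exact hsubgt u hu y hmem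
              omega
            · intro hy
              have : y ∈ Finset.Icc 1 K := by simp only [Finset.mem_Icc]; omega
              rw [← hins] at this
              rcases Finset.mem_insert.1 this with rfl | h
              · omega
              · exact h
          have hchain : Chain 1 us := chain_of us 1 K (by simpa using hunion) hpair
          have hrec : ∀ u ∈ us, ∀ v : LTree, Fgt v = Fgt u → IncrFrom 0 v →
              v.levels.toFinset = Finset.Icc 1 v.numLevels → Av v.brLevels →
              ∃ s, Inc s = v := by
            intro u hu v hF hv1 hv2 hv3
            refine ih v ?_ hv1 hv2 hv3
            have hlt : sizeOf (Fgt u) < sizeOf (Fgt (LTree.wedge 1 t0 t1 rest)) := by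
              rw [Fgt_wedge]
              rcases List.mem_cons.1 hu with rfl | hu'
              · simp; omega
              · rcases List.mem_cons.1 hu' with rfl | hu''
                · simp; omega
                · have : Fgt u ∈ rest.map Fgt := List.mem_map.2 ⟨u, hu'', rfl⟩
                  have := List.sizeOf_lt_of_mem this
                  simp
                  omega
            rw [hF]
            omega
          obtain ⟨ss, hss⟩ := CGen us 1 hAvU
            (fun u hu => IncrFrom.mono (hIncrU u hu) (by omega)) hchain hrec
          have hlen : ss.length = rest.length + 2 := by
            have := congrArg List.length hss
            rw [length_shiftAll, List.length_map] at this
            simpa [hus] using this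
          rcases ss with _ | ⟨s0, ss⟩
          · simp at hlen
          rcases ss with _ | ⟨s1, srest⟩
          · simp at hlen
          refine ⟨.wedge s0 s1 srest, ?_⟩
          rw [Inc_wedge]
          simp only [List.map_cons] at hss
          rw [hss]

lemma rankIn_mono {A : Finset ℕ} {x y : ℕ} (hxy : x ≤ y) : rankIn A x ≤ rankIn A y := by
  refine Finset.card_le_card ?_
  intro z hz
  simp only [Finset.mem_filter] at hz ⊢
  exact ⟨hz.1, by omega⟩

lemma rankIn_lt_of_lt {A : Finset ℕ} {x y : ℕ} (hy : y ∈ A) (hxy : x < y) :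
    rankIn A x < rankIn A y := by
  refine Finset.card_lt_card ⟨?_, ?_⟩
  · intro z hz
    simp only [Finset.mem_filter] at hz ⊢
    exact ⟨hz.1, by omega⟩
  · intro hsub
    have : y ∈ A.filter (· ≤ y) := by simp [hy]
    have := hsub this
    simp only [Finset.mem_filter] at this
    omega

lemma rankIn_injOn {A : Finset ℕ} {x y : ℕ} (hx : x ∈ A) (hy : y ∈ A)
    (h : rankIn A x = rankIn A y) : x = y := by
  rcases lt_trichotomy x y with hlt | heq | hlt
  · have := rankIn_lt_of_lt hy hlt; omega
  · exact heq
  · have := rankIn_lt_of_lt hx hlt; omega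

lemma lt_of_rankIn_lt {A : Finset ℕ} {x y : ℕ} (h : rankIn A x < rankIn A y) : x < y := by
  by_contra hc
  have := rankIn_mono (A := A) (show y ≤ x by omega)
  omega

lemma disjoint_getD_unique {L : SC} (hp : L.Pairwise (fun B C : Finset ℕ => Disjoint B C)) {y : ℕ} {i j : ℕ}
    (hi : i < L.length) (hj : j < L.length)
    (hyi : y ∈ L.getD i ∅) (hyj : y ∈ L.getD j ∅) : i = j := by
  rw [List.getD_eq_getElem _ _ hi] at hyi
  rw [List.getD_eq_getElem _ _ hj] at hyj
  rcases lt_trichotomy i j with h | h | h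
  · have := (List.pairwise_iff_getElem.1 hp) i j hi hj h
    exact absurd hyj (Finset.disjoint_left.1 this hyi)
  · exact h
  · have := (List.pairwise_iff_getElem.1 hp) j i hj hi h
    exact absurd hyi (Finset.disjoint_left.1 this hyj)

lemma countP_take_mono (L : SC) (p : Finset ℕ → Bool) {i1 i2 : ℕ} (h : i1 ≤ i2) :
    (L.take i1).countP p ≤ (L.take i2).countP p := by
  conv_rhs => rw [← List.take_append_drop i1 (L.take i2)]
  rw [List.countP_append, List.take_take, min_eq_left h]
  omega

lemma countP_take_strict (L : SC) (p : Finset ℕ → Bool) {i1 i2 : ℕ} (h : i1 < i2)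
    (hi1 : i1 < L.length) (hp : p (L.getD i1 ∅) = true) :
    (L.take i1).countP p < (L.take i2).countP p := by
  have h1 : (L.take (i1 + 1)).countP p = (L.take i1).countP p + 1 := by
    have e : L.take (i1 + 1) = L.take i1 ++ [L[i1]] := by
      rw [List.take_succ, List.getElem?_eq_getElem hi1]; rfl
    rw [e, List.countP_append]
    have hone : List.countP p [L[i1]] = 1 := by
      have hg : L[i1] = L.getD i1 ∅ := (List.getD_eq_getElem _ _ hi1).symm
      rw [show [L[i1]] = L[i1] :: [] from rfl, List.countP_cons, hg, if_pos hp,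
        List.countP_nil]
    omega
  have h2 := countP_take_mono L p (show i1 + 1 ≤ i2 by omega)
  omega

/-- Membership in the filtered list at position `countP` of the prefix. -/
lemma filter_getD_countP : ∀ (L : SC) (i : ℕ), i < L.length → ∀ y ∈ L.getD i ∅,
    ((L.take i).countP (fun B => decide B.Nonempty) <
        (L.filter (fun B => decide B.Nonempty)).length) ∧
    y ∈ (L.filter (fun B => decide B.Nonempty)).getD
        ((L.take i).countP (fun B => decide B.Nonempty)) ∅ := by
  intro L
  induction L with
  | nil => intro i hi; simp at hi
  | cons B L ih =>
      intro i hi y hy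
      cases i with
      | zero =>
          simp only [List.getD_cons_zero] at hy
          have hpB : decide B.Nonempty = true := by simp; exact ⟨y, hy⟩
          rw [List.filter_cons, if_pos hpB]
          simp [hy]
      | succ i =>
          simp only [List.getD_cons_succ] at hy
          obtain ⟨hlt, hmem⟩ := ih i (by simpa using hi) y hy
          rw [List.take_succ_cons, List.countP_cons, List.filter_cons]
          by_cases hpB : B.Nonempty
          · have hd : decide B.Nonempty = true := by simpa using hpB
            rw [hd]
            simp only [eq_self_iff_true, if_true, ite_true, List.length_cons,
              List.getD_cons_succ]
            exact ⟨by omega, hmem⟩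
          · have hd : decide B.Nonempty = false := by simpa using hpB
            rw [hd]
            simp only [Bool.false_eq_true, if_false, ite_false, add_zero]
            exact ⟨hlt, hmem⟩

/-- Positions of blocks in a pairwise-disjoint list and in its filtered list
compare identically. -/
lemma filter_index_compare {L : SC} (hp : L.Pairwise (fun B C : Finset ℕ => Disjoint B C))
    {y1 y2 : ℕ} {i1 i2 i1' i2' : ℕ} (hi1 : i1 < L.length) (hi2 : i2 < L.length)
    (hi1' : i1' < (L.filter (fun B => decide B.Nonempty)).length)
    (hi2' : i2' < (L.filter (fun B => decide B.Nonempty)).length)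
    (h1 : y1 ∈ L.getD i1 ∅) (h2 : y2 ∈ L.getD i2 ∅)
    (h1' : y1 ∈ (L.filter (fun B => decide B.Nonempty)).getD i1' ∅)
    (h2' : y2 ∈ (L.filter (fun B => decide B.Nonempty)).getD i2' ∅) :
    (i1 < i2 ↔ i1' < i2') := by
  have hpF : (L.filter (fun B => decide B.Nonempty)).Pairwise
      (fun B C : Finset ℕ => Disjoint B C) :=
    List.Pairwise.sublist (List.filter_sublist (l := L)) hp
  obtain ⟨hc1, hm1⟩ := filter_getD_countP L i1 hi1 y1 h1
  obtain ⟨hc2, hm2⟩ := filter_getD_countP L i2 hi2 y2 h2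
  have he1 : i1' = (L.take i1).countP (fun B => decide B.Nonempty) :=
    disjoint_getD_unique hpF hi1' hc1 h1' hm1
  have he2 : i2' = (L.take i2).countP (fun B => decide B.Nonempty) :=
    disjoint_getD_unique hpF hi2' hc2 h2' hm2
  have hp1 : (fun B : Finset ℕ => decide B.Nonempty) (L.getD i1 ∅) = true := by
    simp only [decide_eq_true_eq]
    exact ⟨y1, h1⟩
  have hp2 : (fun B : Finset ℕ => decide B.Nonempty) (L.getD i2 ∅) = true := by
    simp only [decide_eq_true_eq]
    exact ⟨y2, h2⟩
  constructor
  · intro h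
    rw [he1, he2]
    exact countP_take_strict L (fun B => decide B.Nonempty) h hi1 hp1
  · intro h
    by_contra hc
    rcases lt_or_eq_of_le (le_of_not_gt hc) with hlt | heq
    · have := countP_take_strict L (fun B => decide B.Nonempty) hlt hi2 hp2
      omega
    · rw [heq] at he2
      omega

lemma sigmaOf_length (t : LTree) : (sigmaOf t).length = t.brLevels.foldr max 0 := by
  simp [sigmaOf]

lemma mem_sigmaOf_getD {t : LTree} {i : ℕ} (hi : i < (sigmaOf t).length) (x : ℕ) :
    x ∈ (sigmaOf t).getD i ∅ ↔
      (1 ≤ x ∧ x - 1 < t.brLevels.length ∧ t.brLevels.getD (x - 1) 0 = i + 1) := by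
  have hi' : i < (List.range (t.brLevels.foldr max 0)).length := by
    simpa [sigmaOf_length] using hi
  rw [List.getD_eq_getElem _ _ hi]
  have : (sigmaOf t)[i]'hi =
      (((List.range t.brLevels.length).filter
        (fun j => t.brLevels.getD j 0 = i + 1)).toFinset.image (· + 1)) := by
    simp only [sigmaOf]
    rw [List.getElem_map]
    rw [List.getElem_range]
  rw [this]
  simp only [Finset.mem_image, List.mem_toFinset, List.mem_filter, List.mem_range,
    decide_eq_true_eq]
  constructor
  · rintro ⟨j, ⟨hjlen, hjval⟩, rfl⟩
    exact ⟨by omega, by simpa using hjlen, by simpa using hjval⟩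
  · rintro ⟨hx1, hxlen, hxval⟩
    exact ⟨x - 1, ⟨hxlen, hxval⟩, by omega⟩

end Aux

/-- **Corollary.** Any contraction of a left increasing tree is left increasing:
if the increasing tree `τ(P)` is left increasing and `A ⊆ [n]`, then the
`A`-contraction `τ(P|_A)` is left increasing. -/
theorem contraction_of_left_increasing (n : ℕ) (P : SC) (hP : IsSetComp n P)
    (t : LTree) (ht : IsIncTree t) (hsigma : sigmaOf t = P)
    (hleft : ∃ s : PTree, Inc s = t)
    (A : Finset ℕ) (hA : A ⊆ Finset.Icc 1 n) :
    ∀ t' : LTree, IsIncTree t' → sigmaOf t' = restrictSC A P →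
      ∃ s' : PTree, Inc s' = t' := by
  intro t' ht' hsig'
  obtain ⟨s, rfl⟩ := hleft
  have hAvw : Aux.Av (Inc s).brLevels := (Aux.lemB s).1
  have hMP : (P.map (fun B => (B ∩ A).image (rankIn A))).length = P.length := by simp
  have hpM : (P.map (fun B => (B ∩ A).image (rankIn A))).Pairwise
      (fun B C : Finset ℕ => Disjoint B C) := by
    refine List.Pairwise.map _ ?_ hP.2.1
    intro B C hBC
    rw [Finset.disjoint_left]
    rintro y hyB hyC
    obtain ⟨x1, hx1, hr1⟩ := Finset.mem_image.1 hyB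
    obtain ⟨x2, hx2, hr2⟩ := Finset.mem_image.1 hyC
    rw [Finset.mem_inter] at hx1 hx2
    have hx12 : x1 = x2 := Aux.rankIn_injOn hx1.2 hx2.2 (by rw [hr1, hr2])
    subst hx12
    exact Finset.disjoint_left.1 hBC hx1.1 hx2.1
  have hres : restrictSC A P
      = (P.map (fun B => (B ∩ A).image (rankIn A))).filter (fun B => decide B.Nonempty) := rfl
  have hsiglen : (sigmaOf (Inc s)).length = P.length := by rw [hsigma]
  have key : ∀ j, j < t'.brLevels.length → ∃ x i,
      rankIn A x = j + 1 ∧ 1 ≤ x ∧ x - 1 < (Inc s).brLevels.length ∧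
      (Inc s).brLevels.getD (x - 1) 0 = i + 1 ∧
      i < (P.map (fun B => (B ∩ A).image (rankIn A))).length ∧
      (j + 1) ∈ (P.map (fun B => (B ∩ A).image (rankIn A))).getD i ∅ ∧
      (t'.brLevels.getD j 0 - 1) <
        ((P.map (fun B => (B ∩ A).image (rankIn A))).filter (fun B => decide B.Nonempty)).length ∧
      (j + 1) ∈ ((P.map (fun B => (B ∩ A).image (rankIn A))).filter
        (fun B => decide B.Nonempty)).getD (t'.brLevels.getD j 0 - 1) ∅ ∧
      1 ≤ t'.brLevels.getD j 0 := by
    intro j hj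
    have hvmem : t'.brLevels.getD j 0 ∈ t'.brLevels := by
      rw [List.getD_eq_getElem _ _ hj]; exact List.getElem_mem _
    have hv1 : 1 ≤ t'.brLevels.getD j 0 := by
      have := Aux.lt_of_mem_levels t' 0 ht'.1 _ ((Aux.mem_brLevels_iff t' _).1 hvmem)
      omega
    have hvK : t'.brLevels.getD j 0 ≤ t'.brLevels.foldr max 0 := Aux.foldr_max_le_of_mem hvmem
    have hvlt : t'.brLevels.getD j 0 - 1 < (sigmaOf t').length := by
      rw [Aux.sigmaOf_length]; omega
    have hmem1 : (j + 1) ∈ (sigmaOf t').getD (t'.brLevels.getD j 0 - 1) ∅ := by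
      rw [Aux.mem_sigmaOf_getD hvlt]
      refine ⟨by omega, by simpa using hj, ?_⟩
      simp only [Nat.add_sub_cancel]
      omega
    rw [hsig', hres] at hmem1 hvlt
    have hFmem : ((P.map (fun B => (B ∩ A).image (rankIn A))).filter
        (fun B => decide B.Nonempty)).getD (t'.brLevels.getD j 0 - 1) ∅
        ∈ (P.map (fun B => (B ∩ A).image (rankIn A))) := by
      rw [List.getD_eq_getElem _ _ hvlt]
      exact List.filter_sublist.subset (List.getElem_mem _)
    obtain ⟨i, hiM, hieq⟩ := List.getElem_of_mem hFmem
    have hyM : (j + 1) ∈ (P.map (fun B => (B ∩ A).image (rankIn A))).getD i ∅ := by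
      rw [List.getD_eq_getElem _ _ hiM, hieq]; exact hmem1
    have hPi : i < P.length := by rw [← hMP]; exact hiM
    have hMi : (P.map (fun B => (B ∩ A).image (rankIn A))).getD i ∅
        = ((P.getD i ∅) ∩ A).image (rankIn A) := by
      rw [List.getD_eq_getElem _ _ hiM, List.getD_eq_getElem _ _ hPi, List.getElem_map]
    rw [hMi] at hyM
    obtain ⟨x, hxmem, hxrank⟩ := Finset.mem_image.1 hyM
    rw [Finset.mem_inter] at hxmem
    have hxP : x ∈ (sigmaOf (Inc s)).getD i ∅ := by
      rw [hsigma]; exact hxmem.1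
    rw [Aux.mem_sigmaOf_getD (by rw [hsiglen]; exact hPi)] at hxP
    obtain ⟨hx1, hxlen, hxval⟩ := hxP
    exact ⟨x, i, hxrank, hx1, hxlen, hxval, hiM, by rw [hMi]; exact hyM, hvlt, hmem1, hv1⟩
  have hAv' : Aux.Av t'.brLevels := by
    intro a b c hsub hbc hca
    obtain ⟨j1, j2, j3, h12, h23, h3len, e1, e2, e3⟩ := Aux.exists_of_sublist_three hsub
    obtain ⟨x1, i1, r1, hx1pos, hx1len, hx1val, hi1M, hy1M, hv1lt, hy1F, hv1⟩ :=
      key j1 (by omega)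
    obtain ⟨x2, i2, r2, hx2pos, hx2len, hx2val, hi2M, hy2M, hv2lt, hy2F, hv2⟩ :=
      key j2 (by omega)
    obtain ⟨x3, i3, r3, hx3pos, hx3len, hx3val, hi3M, hy3M, hv3lt, hy3F, hv3⟩ :=
      key j3 h3len
    have hcmp23 := Aux.filter_index_compare hpM hi2M hi3M hv2lt hv3lt hy2M hy3M hy2F hy3F
    have hcmp13 := Aux.filter_index_compare hpM hi1M hi3M hv1lt hv3lt hy1M hy3M hy1F hy3F
    have hi23 : i2 < i3 := by
      refine hcmp23.2 ?_
      rw [e2, e3] at *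
      omega
    have hi31 : ¬ i1 < i3 := by
      intro hh
      have := hcmp13.1 hh
      rw [e1, e3] at *
      omega
    have hx12 : x1 < x2 := Aux.lt_of_rankIn_lt (by rw [r1, r2]; omega)
    have hx23 : x2 < x3 := Aux.lt_of_rankIn_lt (by rw [r2, r3]; omega)
    have hsub3 := Aux.sublist_three (Inc s).brLevels (x1 - 1) (x2 - 1) (x3 - 1)
      (by omega) (by omega) hx3len
    exact hAvw _ _ _ hsub3 (by rw [hx2val, hx3val]; omega) (by rw [hx3val, hx1val]; omega)
  exact Aux.lemC (sizeOf (Fgt t')) t' le_rfl ht'.1 ht'.2 hAv'
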